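/- For the 3-state machine M_{3S}, the mixed state after observing □ followed by n △'s is η(△^n) = (2(3^n − 2^n)/(4·3^n − 3·2^n), 2(3^n − 2^n)/(4·3^n − 3·2^n), 2^n/(4·3^n − 3·2^n)) for all n ≥ 0, where η(△^0) = (0,0,1). -/

import Mathlib

/-- Transition matrix of `M_{3S}` for symbol `△`. -/
noncomputable def m3sTr : Matrix (Fin 3) (Fin 3) ℝ :=
  !![0, 0, 0; 1/2, 1/2, 0; 1/3, 1/3, 1/3]

/-- Mixed-state update on symbol `△`: `η ↦ ηT^(△)/(ηT^(△)𝟙)`. -/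
noncomputable def m3sUpdate (η : Fin 3 → ℝ) : Fin 3 → ℝ :=
  fun j => Matrix.vecMul η m3sTr j / (∑ k, Matrix.vecMul η m3sTr k)

lemma m3sUpdate_aab (a b : ℝ) (h : a + b ≠ 0) :
    m3sUpdate ![a, a, b] =
      ![(3 * a + 2 * b) / (6 * (a + b)), (3 * a + 2 * b) / (6 * (a + b)),
        b / (3 * (a + b))] := by
  have h6 : (6 : ℝ) * (a + b) ≠ 0 := mul_ne_zero (by norm_num) h
  have h3 : (3 : ℝ) * (a + b) ≠ 0 := mul_ne_zero (by norm_num) h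
  have hsum : (∑ k, Matrix.vecMul ![a, a, b] m3sTr k) = a + b := by
    simp [m3sTr, Matrix.vecMul, dotProduct, Fin.sum_univ_three]
    ring
  have e0 : Matrix.vecMul ![a, a, b] m3sTr 0 = a / 2 + b / 3 := by
    simp [m3sTr, Matrix.vecMul, dotProduct, Fin.sum_univ_three]
    ring
  have e1 : Matrix.vecMul ![a, a, b] m3sTr 1 = a / 2 + b / 3 := by
    simp [m3sTr, Matrix.vecMul, dotProduct, Fin.sum_univ_three]
    ring
  have e2 : Matrix.vecMul ![a, a, b] m3sTr 2 = b / 3 := by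
    simp [m3sTr, Matrix.vecMul, dotProduct, Fin.sum_univ_three]
    ring
  funext j
  fin_cases j
  · show Matrix.vecMul ![a, a, b] m3sTr 0 / (∑ k, Matrix.vecMul ![a, a, b] m3sTr k)
        = (3 * a + 2 * b) / (6 * (a + b))
    rw [e0, hsum, div_eq_div_iff h h6]; ring
  · show Matrix.vecMul ![a, a, b] m3sTr 1 / (∑ k, Matrix.vecMul ![a, a, b] m3sTr k)
        = (3 * a + 2 * b) / (6 * (a + b))
    rw [e1, hsum, div_eq_div_iff h h6]; ring
  · show Matrix.vecMul ![a, a, b] m3sTr 2 / (∑ k, Matrix.vecMul ![a, a, b] m3sTr k)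
        = b / (3 * (a + b))
    rw [e2, hsum, div_eq_div_iff h h3]; ring

/-- for the machine `M_{3S}`, the mixed state after observing `□`
followed by `n` `△`'s (i.e. the `n`-th iterate of the `△`-update starting from
`η(△⁰) = (0,0,1)`) is
`(2(3ⁿ − 2ⁿ)/(4·3ⁿ − 3·2ⁿ), 2(3ⁿ − 2ⁿ)/(4·3ⁿ − 3·2ⁿ), 2ⁿ/(4·3ⁿ − 3·2ⁿ))`. -/
theorem stmt_14 (n : ℕ) :
    m3sUpdate^[n] ![0, 0, 1] =
      ![2 * ((3 : ℝ) ^ n - 2 ^ n) / (4 * 3 ^ n - 3 * 2 ^ n),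
        2 * ((3 : ℝ) ^ n - 2 ^ n) / (4 * 3 ^ n - 3 * 2 ^ n),
        (2 : ℝ) ^ n / (4 * 3 ^ n - 3 * 2 ^ n)] := by
  induction n with
  | zero => funext j; fin_cases j <;> norm_num
  | succ n ih =>
    have h2 : (0:ℝ) < (2:ℝ)^n := by positivity
    have h3 : (0:ℝ) < (3:ℝ)^n := by positivity
    have h23 : (2:ℝ)^n ≤ 3^n := pow_le_pow_left₀ (by norm_num) (by norm_num) n
    have hD : (0:ℝ) < 4 * 3^n - 3 * 2^n := by nlinarith
    have hDne : (4 * (3:ℝ)^n - 3 * 2^n) ≠ 0 := ne_of_gt hD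
    have hSne : ((2:ℝ) * 3^n - 2^n) ≠ 0 := ne_of_gt (by nlinarith)
    have hD' : ((4:ℝ) * 3^(n+1) - 3 * 2^(n+1)) ≠ 0 := by
      rw [pow_succ, pow_succ]; nlinarith
    have hab : 2 * ((3:ℝ)^n - 2^n) / (4 * 3^n - 3 * 2^n) +
        (2:ℝ)^n / (4 * 3^n - 3 * 2^n) ≠ 0 := by
      rw [← add_div]
      exact div_ne_zero (by nlinarith) hDne
    have hab' : 2 * ((3:ℝ)^n - 2^n) / (4 * 3^n - 3 * 2^n) +
        (2:ℝ)^n / (4 * 3^n - 3 * 2^n) = (2 * 3^n - 2^n) / (4 * 3^n - 3 * 2^n) := by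
      rw [← add_div]; ring_nf
    rw [Function.iterate_succ_apply', ih, m3sUpdate_aab _ _ hab]
    have comp1 : (3 * (2 * ((3:ℝ)^n - 2^n) / (4 * 3^n - 3 * 2^n))
          + 2 * ((2:ℝ)^n / (4 * 3^n - 3 * 2^n))) /
          (6 * ((2 * 3^n - 2^n) / (4 * 3^n - 3 * 2^n)))
        = 2 * ((3:ℝ)^(n+1) - 2^(n+1)) / (4 * 3^(n+1) - 3 * 2^(n+1)) := by
      have hden : (6:ℝ) * ((2 * 3^n - 2^n) / (4 * 3^n - 3 * 2^n)) ≠ 0 :=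
        mul_ne_zero (by norm_num) (div_ne_zero hSne hDne)
      have hD'' : ((4:ℝ) * (3^n * 3) - 3 * (2^n * 2)) ≠ 0 := by nlinarith
      rw [pow_succ, pow_succ,
        show (3:ℝ) * (2 * (3^n - 2^n) / (4 * 3^n - 3 * 2^n))
            + 2 * ((2:ℝ)^n / (4 * 3^n - 3 * 2^n))
          = (6 * 3^n - 4 * 2^n) / (4 * 3^n - 3 * 2^n) from by ring,
        div_eq_div_iff hden hD'']
      ring
    have comp2 : ((2:ℝ)^n / (4 * 3^n - 3 * 2^n)) /
          (3 * ((2 * 3^n - 2^n) / (4 * 3^n - 3 * 2^n)))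
        = (2:ℝ)^(n+1) / (4 * 3^(n+1) - 3 * 2^(n+1)) := by
      have hden : (3:ℝ) * ((2 * 3^n - 2^n) / (4 * 3^n - 3 * 2^n)) ≠ 0 :=
        mul_ne_zero (by norm_num) (div_ne_zero hSne hDne)
      have hD'' : ((4:ℝ) * (3^n * 3) - 3 * (2^n * 2)) ≠ 0 := by nlinarith
      rw [pow_succ, pow_succ, div_eq_div_iff hden hD'']
      ring
    rw [hab', comp1, comp2]
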